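/- arXiv:1004.1633 — 5 statements merged into one kernel-verified Lean document; each statement's English description precedes it below -/
import Mathlib

section
/- For any positive integer D (even or odd) and any integer k, the complex number a_k = (1/D)·∑_{j=0}^{D-1} exp(i·θ_j)·exp(2πi·jk/D), where θ_j = πj²/D if D is even and θ_j = 2πj²/D if D is odd, satisfies |a_k| = 1/√D. -/
open Finset Complex

private lemma sum_range_eq_sum_zmod {D : ℕ} [NeZero D] (f : ℕ → ℂ) :
    ∑ j ∈ Finset.range D, f j = ∑ x : ZMod D, f x.val := by
  refine Finset.sum_nbij' (fun i => (i : ZMod D)) (fun x => x.val) ?_ ?_ ?_ ?_ ?_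
  · intro a _; exact Finset.mem_univ _
  · intro x _; exact Finset.mem_range.2 x.val_lt
  · intro a ha; exact ZMod.val_natCast_of_lt (Finset.mem_range.1 ha)
  · intro x _; exact ZMod.natCast_rightInverse x
  · intro a ha; rw [ZMod.val_natCast_of_lt (Finset.mem_range.1 ha)]

private lemma key (D : ℕ) (hD : 0 < D) (c : ℝ) (k : ℤ)
    (h1 : ∀ j : ℕ, Complex.exp (((2 * c * D * j : ℝ) : ℂ) * Complex.I) = 1)
    (h2 : Complex.exp (((c * (D : ℝ) ^ 2 : ℝ) : ℂ) * Complex.I) = 1)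
    (h3 : ∀ b : ℕ, 0 < b → b < D → Complex.exp (((2 * c * b : ℝ) : ℂ) * Complex.I) ≠ 1) :
    ‖∑ j ∈ Finset.range D,
      Complex.exp (((c * (j : ℝ) ^ 2 + 2 * Real.pi * j * k / D : ℝ) : ℂ) * Complex.I)‖
      = Real.sqrt D := by
  haveI : NeZero D := ⟨hD.ne'⟩
  have hD' : (D : ℝ) ≠ 0 := Nat.cast_ne_zero.2 hD.ne'
  set r : ℕ → ℝ := fun j => c * (j : ℝ) ^ 2 + 2 * Real.pi * j * k / D with hr
  set E : ℕ → ℂ := fun j => Complex.exp (((r j : ℝ) : ℂ) * Complex.I) with hE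
  -- periodicity
  have hper : Function.Periodic E D := by
    intro a
    have hsplit : ((r (a + D) : ℝ) : ℂ) * Complex.I
        = ((r a : ℝ) : ℂ) * Complex.I + ((2 * c * D * a : ℝ) : ℂ) * Complex.I
          + ((c * (D : ℝ) ^ 2 : ℝ) : ℂ) * Complex.I + (k : ℂ) * (2 * Real.pi * Complex.I) := by
      simp only [hr]
      have hDc : (D : ℂ) ≠ 0 := Nat.cast_ne_zero.2 hD.ne'
      push_cast
      field_simp
      ring
    simp only [hE, hsplit, Complex.exp_add, h1 a, h2, Complex.exp_int_mul_two_pi_mul_I,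
      mul_one]
  -- conj of E
  have hconj : ∀ j : ℕ, (starRingEnd ℂ) (E j) = Complex.exp (((-(r j) : ℝ) : ℂ) * Complex.I) := by
    intro j
    rw [hE, ← Complex.exp_conj]
    congr 1
    rw [map_mul, Complex.conj_ofReal, Complex.conj_I]
    push_cast
    ring
  set S : ℂ := ∑ j ∈ Finset.range D, E j with hS
  have hmul : S * (starRingEnd ℂ) S = (D : ℂ) := by
    rw [hS, map_sum, Finset.sum_mul_sum]
    simp only [hconj]
    rw [sum_range_eq_sum_zmod (f := fun j => ∑ j' ∈ Finset.range D,
      E j * Complex.exp (((-(r j') : ℝ) : ℂ) * Complex.I))]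
    have hx : ∀ x : ZMod D, ∑ j' ∈ Finset.range D,
        E x.val * Complex.exp (((-(r j') : ℝ) : ℂ) * Complex.I)
        = ∑ y : ZMod D, E x.val * Complex.exp (((-(r y.val) : ℝ) : ℂ) * Complex.I) := by
      intro x
      exact sum_range_eq_sum_zmod (f := fun j' => E x.val * Complex.exp (((-(r j') : ℝ) : ℂ) * Complex.I))
    rw [Finset.sum_congr rfl (fun x _ => hx x), Finset.sum_comm]
    -- now ∑ y, ∑ x, E x.val * exp(-(r y.val) I); reindex x = y + m
    have hreindex : ∀ y : ZMod D,
        ∑ x : ZMod D, E x.val * Complex.exp (((-(r y.val) : ℝ) : ℂ) * Complex.I)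
        = ∑ m : ZMod D, E (y.val + m.val) * Complex.exp (((-(r y.val) : ℝ) : ℂ) * Complex.I) := by
      intro y
      rw [← Fintype.sum_equiv (Equiv.addLeft y)
        (fun m => E ((y + m).val) * Complex.exp (((-(r y.val) : ℝ) : ℂ) * Complex.I))
        (fun x => E x.val * Complex.exp (((-(r y.val) : ℝ) : ℂ) * Complex.I))
        (fun m => rfl)]
      refine Finset.sum_congr rfl fun m _ => ?_
      congr 1
      show E ((y + m).val) = E (y.val + m.val)
      rw [ZMod.val_add, hper.map_mod_nat]
    rw [Finset.sum_congr rfl (fun y _ => hreindex y), Finset.sum_comm]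
    -- inner term: E (a+b) * exp(-(r a) I) = ζ_b ^ a * exp(const_b I)
    have hterm : ∀ (b a : ℕ), E (a + b) * Complex.exp (((-(r a) : ℝ) : ℂ) * Complex.I)
        = Complex.exp (((2 * c * b : ℝ) : ℂ) * Complex.I) ^ a
          * Complex.exp (((c * (b : ℝ) ^ 2 + 2 * Real.pi * b * k / D : ℝ) : ℂ) * Complex.I) := by
      intro b a
      rw [hE, ← Complex.exp_add, ← Complex.exp_nat_mul, ← Complex.exp_add]
      congr 1
      simp only [hr]
      have hDc : (D : ℂ) ≠ 0 := Nat.cast_ne_zero.2 hD.ne'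
      push_cast
      field_simp
      ring
    have hinner : ∀ m : ZMod D,
        ∑ y : ZMod D, E (y.val + m.val) * Complex.exp (((-(r y.val) : ℝ) : ℂ) * Complex.I)
        = if m = 0 then (D : ℂ) else 0 := by
      intro m
      simp only [hterm m.val]
      rw [← Finset.sum_mul, ← sum_range_eq_sum_zmod (f := fun a =>
        Complex.exp (((2 * c * m.val : ℝ) : ℂ) * Complex.I) ^ a)]
      by_cases hm : m = 0
      · subst hm
        simp [Finset.card_range]
      · rw [if_neg hm]
        have hb1 : 0 < m.val := ZMod.val_pos.2 hm
        have hb2 : m.val < D := m.val_lt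
        have hz : Complex.exp (((2 * c * m.val : ℝ) : ℂ) * Complex.I) ≠ 1 := h3 _ hb1 hb2
        rw [geom_sum_eq hz]
        have hzD : Complex.exp (((2 * c * m.val : ℝ) : ℂ) * Complex.I) ^ D = 1 := by
          rw [← Complex.exp_nat_mul]
          rw [show (D : ℂ) * (((2 * c * m.val : ℝ) : ℂ) * Complex.I)
            = ((2 * c * D * m.val : ℝ) : ℂ) * Complex.I by push_cast; ring]
          exact h1 m.val
        rw [hzD]
        simp
    rw [Finset.sum_congr rfl (fun m _ => hinner m)]
    simp
  -- conclude
  have habs : ‖S‖ ^ 2 = (D : ℝ) := by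
    have := Complex.mul_conj S
    rw [hmul] at this
    have : Complex.normSq S = (D : ℝ) := by
      exact_mod_cast this.symm
    rw [Complex.sq_norm, this]
  calc ‖S‖ = Real.sqrt (‖S‖ ^ 2) := (Real.sqrt_sq (norm_nonneg S)).symm
    _ = Real.sqrt D := by rw [habs]

/-- For any positive integer `D` and any integer `k`, the coefficient
`a_k = (1/D) ∑_{j=0}^{D-1} e^{iθ_j} e^{2πi jk/D}` with `θ_j = π j²/D` for even `D`
and `θ_j = 2π j²/D` for odd `D` has modulus `1/√D`. -/
theorem stmt2 (D : ℕ) (hD : 0 < D) (k : ℤ) :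
    ‖(1 / (D : ℂ)) * ∑ j ∈ Finset.range D,
        Complex.exp (Complex.I *
          ((if Even D then Real.pi * (j : ℝ) ^ 2 / D else 2 * Real.pi * (j : ℝ) ^ 2 / D : ℝ) : ℂ)) *
          Complex.exp (2 * Real.pi * Complex.I * (j : ℂ) * (k : ℂ) / D)‖
      = 1 / Real.sqrt D := by
  have hD0 : (0:ℝ) < D := by exact_mod_cast hD
  have hD' : (D:ℝ) ≠ 0 := ne_of_gt hD0
  have h2π : (2*Real.pi) ≠ 0 := by positivity
  have hfin : (1:ℝ)/D * Real.sqrt D = 1 / Real.sqrt D := by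
    have hs : Real.sqrt D * Real.sqrt D = (D:ℝ) := Real.mul_self_sqrt hD0.le
    have hs0 : Real.sqrt (D:ℝ) ≠ 0 := by positivity
    rw [eq_div_iff hs0]
    field_simp
    exact Real.sq_sqrt hD0.le
  rcases Nat.even_or_odd D with hEv | hOd
  · -- even case, c = π/D
    set c : ℝ := Real.pi / D with hc
    have h1 : ∀ j : ℕ, Complex.exp (((2 * c * D * j : ℝ) : ℂ) * Complex.I) = 1 := by
      intro j
      have : (2 * c * D * j : ℝ) = ((j:ℤ):ℝ) * (2*Real.pi) := by
        rw [hc]; push_cast; field_simp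
      rw [show ((2 * c * D * j : ℝ) : ℂ) * Complex.I = ((j:ℤ):ℂ) * (2*(Real.pi:ℂ)*Complex.I) by
        rw [this]; push_cast; ring]
      exact Complex.exp_int_mul_two_pi_mul_I j
    have h2 : Complex.exp (((c * (D : ℝ) ^ 2 : ℝ) : ℂ) * Complex.I) = 1 := by
      obtain ⟨d, hd⟩ := hEv
      have hDr : (D:ℝ) = 2*d := by rw [hd]; push_cast; ring
      have : (c * (D : ℝ) ^ 2 : ℝ) = ((d:ℤ):ℝ) * (2*Real.pi) := by
        rw [hc, hDr]
        have hd0 : (d:ℝ) ≠ 0 := by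
          intro h0
          rw [h0, mul_zero] at hDr; exact hD' hDr
        rw [div_mul_eq_mul_div, div_eq_iff (mul_ne_zero two_ne_zero hd0)]; push_cast; ring
      rw [show ((c * (D : ℝ) ^ 2 : ℝ) : ℂ) * Complex.I = ((d:ℤ):ℂ) * (2*(Real.pi:ℂ)*Complex.I) by
        rw [this]; push_cast; ring]
      exact Complex.exp_int_mul_two_pi_mul_I d
    have h3 : ∀ b : ℕ, 0 < b → b < D →
        Complex.exp (((2 * c * b : ℝ) : ℂ) * Complex.I) ≠ 1 := by
      intro b hb1 hb2 hcon
      rw [Complex.exp_eq_one_iff] at hcon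
      obtain ⟨n, hn⟩ := hcon
      rw [show (n:ℂ) * (2*(Real.pi:ℂ)*Complex.I) = (((n:ℝ)*(2*Real.pi) : ℝ):ℂ) * Complex.I by
        push_cast; ring] at hn
      have hre : (2 * c * b : ℝ) = (n:ℝ)*(2*Real.pi) :=
        Complex.ofReal_injective (mul_right_cancel₀ Complex.I_ne_zero hn)
      rw [hc] at hre
      have hdiv : (2*Real.pi*(b:ℝ))/D = (n:ℝ)*(2*Real.pi) := by linear_combination hre
      rw [div_eq_iff hD'] at hdiv
      have hb : (b:ℝ) = (n:ℝ)*D := mul_left_cancel₀ h2π (by linear_combination hdiv)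
      have hb0 : (0:ℝ) < b := by exact_mod_cast hb1
      have hbD : (b:ℝ) < D := by exact_mod_cast hb2
      rcases le_or_gt n 0 with hn0 | hn0
      · have : (n:ℝ) ≤ 0 := by exact_mod_cast hn0
        nlinarith
      · have : (1:ℝ) ≤ n := by exact_mod_cast hn0
        nlinarith
    have hterm : ∀ j ∈ Finset.range D,
        Complex.exp (Complex.I *
          ((if Even D then Real.pi * (j : ℝ) ^ 2 / D else 2 * Real.pi * (j : ℝ) ^ 2 / D : ℝ) : ℂ)) *
          Complex.exp (2 * Real.pi * Complex.I * (j : ℂ) * (k : ℂ) / D)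
        = Complex.exp (((c * (j : ℝ) ^ 2 + 2 * Real.pi * j * k / D : ℝ) : ℂ) * Complex.I) := by
      intro j _
      rw [if_pos hEv, ← Complex.exp_add]
      congr 1
      rw [hc]
      push_cast
      ring
    rw [Finset.sum_congr rfl hterm, norm_mul, key D hD c k h1 h2 h3, norm_div, norm_one,
      Complex.norm_natCast]
    exact hfin
  · -- odd case, c = 2π/D
    set c : ℝ := 2*Real.pi / D with hc
    have h1 : ∀ j : ℕ, Complex.exp (((2 * c * D * j : ℝ) : ℂ) * Complex.I) = 1 := by
      intro j
      have : (2 * c * D * j : ℝ) = ((2*j:ℤ):ℝ) * (2*Real.pi) := by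
        rw [hc]; push_cast; field_simp
      rw [show ((2 * c * D * j : ℝ) : ℂ) * Complex.I = ((2*j:ℤ):ℂ) * (2*(Real.pi:ℂ)*Complex.I) by
        rw [this]; push_cast; ring]
      exact Complex.exp_int_mul_two_pi_mul_I _
    have h2 : Complex.exp (((c * (D : ℝ) ^ 2 : ℝ) : ℂ) * Complex.I) = 1 := by
      have : (c * (D : ℝ) ^ 2 : ℝ) = ((D:ℤ):ℝ) * (2*Real.pi) := by
        rw [hc]; push_cast; field_simp
      rw [show ((c * (D : ℝ) ^ 2 : ℝ) : ℂ) * Complex.I = ((D:ℤ):ℂ) * (2*(Real.pi:ℂ)*Complex.I) by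
        rw [this]; push_cast; ring]
      exact Complex.exp_int_mul_two_pi_mul_I _
    have h3 : ∀ b : ℕ, 0 < b → b < D →
        Complex.exp (((2 * c * b : ℝ) : ℂ) * Complex.I) ≠ 1 := by
      intro b hb1 hb2 hcon
      rw [Complex.exp_eq_one_iff] at hcon
      obtain ⟨n, hn⟩ := hcon
      rw [show (n:ℂ) * (2*(Real.pi:ℂ)*Complex.I) = (((n:ℝ)*(2*Real.pi) : ℝ):ℂ) * Complex.I by
        push_cast; ring] at hn
      have hre : (2 * c * b : ℝ) = (n:ℝ)*(2*Real.pi) :=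
        Complex.ofReal_injective (mul_right_cancel₀ Complex.I_ne_zero hn)
      rw [hc] at hre
      have hdiv : (2*Real.pi*(2*(b:ℝ)))/D = (n:ℝ)*(2*Real.pi) := by linear_combination hre
      rw [div_eq_iff hD'] at hdiv
      have hb : 2*(b:ℝ) = (n:ℝ)*D := mul_left_cancel₀ h2π (by linear_combination hdiv)
      have hb0 : (0:ℝ) < b := by exact_mod_cast hb1
      have hbD : (b:ℝ) < D := by exact_mod_cast hb2
      -- 0 < n D = 2b < 2D so n = 1, hence D = 2b, contradicting oddness
      have hn1 : n = 1 := by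
        rcases le_or_gt n 0 with hn0 | hn0
        · exfalso
          have : (n:ℝ) ≤ 0 := by exact_mod_cast hn0
          nlinarith
        · rcases lt_or_ge n 2 with hn2 | hn2
          · omega
          · exfalso
            have : (2:ℝ) ≤ n := by exact_mod_cast hn2
            nlinarith
      rw [hn1] at hb
      norm_num at hb
      have hDb : D = 2*b := by
        have : (D:ℝ) = ((2*b : ℕ):ℝ) := by push_cast; linarith
        exact_mod_cast this
      have : Even D := ⟨b, by omega⟩
      exact (Nat.not_even_iff_odd.2 hOd) this
    have hterm : ∀ j ∈ Finset.range D,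
        Complex.exp (Complex.I *
          ((if Even D then Real.pi * (j : ℝ) ^ 2 / D else 2 * Real.pi * (j : ℝ) ^ 2 / D : ℝ) : ℂ)) *
          Complex.exp (2 * Real.pi * Complex.I * (j : ℂ) * (k : ℂ) / D)
        = Complex.exp (((c * (j : ℝ) ^ 2 + 2 * Real.pi * j * k / D : ℝ) : ℂ) * Complex.I) := by
      intro j _
      rw [if_neg (Nat.not_even_iff_odd.2 hOd), ← Complex.exp_add]
      congr 1
      rw [hc]
      push_cast
      ring
    rw [Finset.sum_congr rfl hterm, norm_mul, key D hD c k h1 h2 h3, norm_div, norm_one,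
      Complex.norm_natCast]
    exact hfin
end

section
/- Let D ≥ 1 and let a : Fin D → ℂ satisfy ∑_{k} conj(a_k)·a_{k⊕m} = δ_{m,0} for all m (where ⊕ is addition mod D). Then the D² states |ψ_{m,n}⟩ = ∑_k a_k |k⊕m⟩⊗|k⊕m⊕n⟩, for m,n ∈ {0,...,D−1}, form an orthonormal basis of ℂ^D ⊗ ℂ^D. -/
open Finset


theorem onv (D : ℕ) [NeZero D] (a : Fin D → ℂ)
    (ha : ∀ m : Fin D, ∑ k : Fin D, (starRingEnd ℂ) (a k) * a (k + m)
        = if m = 0 then 1 else 0) :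
    Orthonormal ℂ (fun mn : Fin D × Fin D => ∑ k : Fin D,
          a k • EuclideanSpace.single (k + mn.1, k + mn.1 + mn.2) (1 : ℂ)) := by
  rw [orthonormal_iff_ite]
  intro p q
  simp only [sum_inner, inner_sum, inner_smul_left, inner_smul_right,
    EuclideanSpace.inner_single_left, EuclideanSpace.single_apply, map_one, one_mul]
  have hcond : ∀ x x1 : Fin D,
      ((x1 + p.1, x1 + p.1 + p.2) = (x + q.1, x + q.1 + q.2)) ↔
        (x = x1 + p.1 - q.1 ∧ p.2 = q.2) := by
    intro x x1
    constructor
    · rintro h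
      rw [Prod.mk.injEq] at h
      obtain ⟨h1, h2⟩ := h
      refine ⟨eq_sub_of_add_eq h1.symm, ?_⟩
      rw [h1] at h2
      exact add_left_cancel h2
    · rintro ⟨rfl, h2⟩
      simp [sub_add_cancel, h2]
  simp only [hcond, mul_ite, mul_one, mul_zero]
  by_cases hn : p.2 = q.2
  · simp only [hn, and_true, ite_and]
    simp only [Finset.mul_sum, mul_ite, mul_zero]
    rw [Finset.sum_comm]
    simp only [Finset.sum_ite_eq', Finset.mem_univ, if_true]
    have : ∀ x1 : Fin D, a (x1 + p.1 - q.1) * (starRingEnd ℂ) (a x1)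
        = (starRingEnd ℂ) (a x1) * a (x1 + (p.1 - q.1)) := by
      intro x1; rw [mul_comm, add_sub_assoc]
    simp only [this]
    rw [ha]
    simp [Prod.ext_iff, hn, sub_eq_zero]
  · simp [hn, Prod.ext_iff]


/-- If the coefficients `a : Fin D → ℂ` satisfy the autocorrelation conditions
`∑_k conj(a_k) a_{k⊕m} = δ_{m,0}`, then the `D²` states
`|ψ_{m,n}⟩ = ∑_k a_k |k⊕m⟩ ⊗ |k⊕m⊕n⟩` form an orthonormal basis of `ℂ^D ⊗ ℂ^D`. -/
theorem stmt5 (D : ℕ) [NeZero D] (a : Fin D → ℂ)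
    (ha : ∀ m : Fin D, ∑ k : Fin D, (starRingEnd ℂ) (a k) * a (k + m)
        = if m = 0 then 1 else 0) :
    ∃ b : OrthonormalBasis (Fin D × Fin D) ℂ (EuclideanSpace ℂ (Fin D × Fin D)),
      ∀ mn : Fin D × Fin D,
        b mn = ∑ k : Fin D,
          a k • EuclideanSpace.single (k + mn.1, k + mn.1 + mn.2) (1 : ℂ) := by
  have hon := onv D a ha
  have hcard : Fintype.card (Fin D × Fin D)
      = Module.finrank ℂ (EuclideanSpace ℂ (Fin D × Fin D)) := by
    simp [finrank_euclideanSpace]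
  let B := basisOfOrthonormalOfCardEqFinrank hon hcard
  have hB : ⇑B = _ := coe_basisOfOrthonormalOfCardEqFinrank hon hcard
  refine ⟨B.toOrthonormalBasis (by rwa [hB]), fun mn => ?_⟩
  rw [Module.Basis.coe_toOrthonormalBasis, hB]
end

section
/- Let D ≥ 1 and a : Fin D → ℂ. The orthonormality conditions ∑_{k=0}^{D-1} conj(a_k)·a_{k⊕m} = δ_{m,0} for all m = 0,...,D−1 hold if and only if there exist real numbers θ_0,...,θ_{D-1} such that a_k = (1/D)·∑_{j=0}^{D-1} e^{iθ_j}·ω^{kj} for all k, where ω = e^{2πi/D}. -/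
open Finset

namespace Stmt6Aux

noncomputable def z (D : ℕ) : ℂ := Complex.exp (2 * Real.pi * Complex.I / D)

variable {D : ℕ} [NeZero D]

lemma hprim : IsPrimitiveRoot (z D) D := Complex.isPrimitiveRoot_exp D (NeZero.ne D)

lemma hpowD : z D ^ D = 1 := hprim.pow_eq_one

lemma habs : ‖z D‖ = 1 := by
  have h : ‖z D‖ ^ D = 1 := by rw [← norm_pow, hpowD, norm_one]
  have h0 : (0:ℝ) ≤ ‖z D‖ := norm_nonneg _
  rcases lt_trichotomy (‖z D‖) 1 with h1 | h1 | h1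
  · have := pow_lt_one₀ h0 h1 (NeZero.ne D); rw [h] at this; exact absurd this (lt_irrefl _)
  · exact h1
  · have := one_lt_pow₀ h1 (NeZero.ne D); rw [h] at this; exact absurd this (lt_irrefl _)

lemma conj_pow_mul (n : ℕ) : z D ^ n * (starRingEnd ℂ) (z D ^ n) = 1 := by
  rw [Complex.mul_conj, ← Complex.ofReal_one]
  congr 1
  rw [map_pow, Complex.normSq_eq_norm_sq, habs]
  norm_num

lemma pow_mod (n : ℕ) : z D ^ (n % D) = z D ^ n := by
  conv_rhs => rw [← Nat.div_add_mod n D]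
  rw [pow_add, pow_mul, hpowD, one_pow, one_mul]

lemma pow_mul_mod (n j : ℕ) : z D ^ ((n % D) * j) = z D ^ (n * j) := by
  rw [← pow_mod ((n % D) * j), ← pow_mod (n * j)]
  congr 1
  exact (Nat.mod_modEq n D).mul_right j

lemma ortho (x y : Fin D) :
    ∑ t : Fin D, z D ^ ((x : ℕ) * (t : ℕ)) * (starRingEnd ℂ) (z D ^ ((y : ℕ) * (t : ℕ)))
      = if x = y then (D : ℂ) else 0 := by
  have hterm : ∀ t : Fin D,
      z D ^ ((x : ℕ) * (t : ℕ)) * (starRingEnd ℂ) (z D ^ ((y : ℕ) * (t : ℕ)))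
        = (z D ^ (x : ℕ) * (starRingEnd ℂ) (z D ^ (y : ℕ))) ^ (t : ℕ) := fun t => by
    rw [mul_pow, ← pow_mul, ← map_pow, ← pow_mul]
  rw [Finset.sum_congr rfl fun t _ => hterm t]
  by_cases hxy : x = y
  · subst hxy
    rw [if_pos rfl]
    have h1 : ∀ t : Fin D, (z D ^ (x : ℕ) * (starRingEnd ℂ) (z D ^ (x : ℕ))) ^ (t : ℕ) = 1 :=
      fun t => by rw [conj_pow_mul, one_pow]
    rw [Finset.sum_congr rfl fun t _ => h1 t]
    simp [Finset.card_univ]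
  · set μ : ℂ := z D ^ (x : ℕ) * (starRingEnd ℂ) (z D ^ (y : ℕ)) with hμ
    have hμD : μ ^ D = 1 := by
      rw [hμ, mul_pow, ← map_pow, ← pow_mul, ← pow_mul, mul_comm (x:ℕ) D, mul_comm (y:ℕ) D,
        pow_mul, pow_mul, hpowD, one_pow, one_pow, map_one, mul_one]
    have hμ1 : μ ≠ 1 := by
      intro h
      apply hxy
      have h2 : z D ^ (x : ℕ) = z D ^ (y : ℕ) := by
        have h3 := congrArg (· * z D ^ (y : ℕ)) h
        simp only [one_mul] at h3
        rw [hμ, mul_assoc, mul_comm ((starRingEnd ℂ) (z D ^ (y:ℕ))), conj_pow_mul, mul_one] at h3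
        exact h3
      exact Fin.ext (hprim.pow_inj x.isLt y.isLt h2)
    rw [if_neg hxy]
    rw [Fin.sum_univ_eq_sum_range (fun t => μ ^ t) D]
    rw [geom_sum_eq hμ1, hμD, sub_self, zero_div]

lemma ortho' (x y : Fin D) :
    ∑ t : Fin D, (starRingEnd ℂ) (z D ^ ((x : ℕ) * (t : ℕ))) * z D ^ ((y : ℕ) * (t : ℕ))
      = if x = y then (D : ℂ) else 0 := by
  have h := congrArg (starRingEnd ℂ) (ortho (D := D) x y)
  rw [map_sum] at h
  simp only [map_mul, Complex.conj_conj] at h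
  rw [h]
  split <;> simp

lemma sum_z (m : Fin D) :
    ∑ j : Fin D, z D ^ ((m : ℕ) * (j : ℕ)) = if m = 0 then (D : ℂ) else 0 := by
  have h := ortho (D := D) m 0
  simpa using h

noncomputable def dft (a : Fin D → ℂ) (j : Fin D) : ℂ :=
  ∑ k : Fin D, a k * (starRingEnd ℂ) (z D ^ ((k : ℕ) * (j : ℕ)))

lemma conj_dft (a : Fin D → ℂ) (j : Fin D) :
    (starRingEnd ℂ) (dft a j) = ∑ k : Fin D, (starRingEnd ℂ) (a k) * z D ^ ((k : ℕ) * (j : ℕ)) := by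
  rw [dft, map_sum]
  refine Finset.sum_congr rfl fun k _ => ?_
  rw [map_mul, Complex.conj_conj]

lemma inversion (a : Fin D → ℂ) (k : Fin D) :
    (1 / (D : ℂ)) * ∑ j : Fin D, dft a j * z D ^ ((k : ℕ) * (j : ℕ)) = a k := by
  have h1 : ∑ j : Fin D, dft a j * z D ^ ((k : ℕ) * (j : ℕ))
      = ∑ k' : Fin D, a k' *
          ∑ j : Fin D, z D ^ ((k : ℕ) * (j : ℕ)) * (starRingEnd ℂ) (z D ^ ((k' : ℕ) * (j : ℕ))) := by
    simp only [dft, Finset.sum_mul, Finset.mul_sum]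
    rw [Finset.sum_comm]
    exact Finset.sum_congr rfl fun k' _ => Finset.sum_congr rfl fun j _ => by ring
  rw [h1, Finset.sum_congr rfl fun k' _ => by rw [ortho (D := D) k k']]
  have hD : (D : ℂ) ≠ 0 := Nat.cast_ne_zero.mpr (NeZero.ne D)
  simp only [mul_ite, mul_zero, Finset.sum_ite_eq, Finset.mem_univ, if_true]
  field_simp

lemma dft_of_formula (a u : Fin D → ℂ)
    (h : ∀ k : Fin D, a k = (1 / (D : ℂ)) * ∑ j : Fin D, u j * z D ^ ((k : ℕ) * (j : ℕ)))
    (j : Fin D) : dft a j = u j := by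
  have hD : (D : ℂ) ≠ 0 := Nat.cast_ne_zero.mpr (NeZero.ne D)
  rw [dft, Finset.sum_congr rfl fun k _ => by rw [h k]]
  have h1 : ∑ k : Fin D, (1 / (D : ℂ)) * (∑ j' : Fin D, u j' * z D ^ ((k : ℕ) * (j' : ℕ)))
        * (starRingEnd ℂ) (z D ^ ((k : ℕ) * (j : ℕ)))
      = (1 / (D : ℂ)) * ∑ j' : Fin D, u j' *
          ∑ k : Fin D, z D ^ ((j' : ℕ) * (k : ℕ)) * (starRingEnd ℂ) (z D ^ ((j : ℕ) * (k : ℕ))) := by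
    simp only [Finset.sum_mul, Finset.mul_sum]
    rw [Finset.sum_comm]
    refine Finset.sum_congr rfl fun j' _ => Finset.sum_congr rfl fun k _ => ?_
    rw [Nat.mul_comm (j' : ℕ) (k : ℕ), Nat.mul_comm (j : ℕ) (k : ℕ)]
    ring
  rw [h1, Finset.sum_congr rfl fun j' _ => by rw [ortho (D := D) j' j]]
  simp only [mul_ite, mul_zero, Finset.sum_ite_eq', Finset.mem_univ, if_true]
  field_simp

lemma pow_add_val (k m : Fin D) (j : ℕ) :
    z D ^ (((k + m : Fin D) : ℕ) * j) = z D ^ ((k : ℕ) * j) * z D ^ ((m : ℕ) * j) := by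
  rw [Fin.val_add, pow_mul_mod, add_mul, pow_add]

lemma autocorr_imp (a : Fin D → ℂ)
    (H : ∀ m : Fin D, ∑ k : Fin D, (starRingEnd ℂ) (a k) * a (k + m) = if m = 0 then 1 else 0)
    (j : Fin D) : (starRingEnd ℂ) (dft a j) * dft a j = 1 := by
  rw [conj_dft, dft, Finset.sum_mul_sum]
  have h1 : ∀ k : Fin D,
      ∑ k' : Fin D, ((starRingEnd ℂ) (a k) * z D ^ ((k : ℕ) * (j : ℕ)))
          * (a k' * (starRingEnd ℂ) (z D ^ ((k' : ℕ) * (j : ℕ))))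
        = ∑ m : Fin D, (starRingEnd ℂ) (a k) * a (k + m)
            * (starRingEnd ℂ) (z D ^ ((m : ℕ) * (j : ℕ))) := by
    intro k
    rw [← Equiv.sum_comp (Equiv.addLeft k) (fun k' => ((starRingEnd ℂ) (a k)
      * z D ^ ((k : ℕ) * (j : ℕ))) * (a k' * (starRingEnd ℂ) (z D ^ ((k' : ℕ) * (j : ℕ)))))]
    refine Finset.sum_congr rfl fun m _ => ?_
    have he : (Equiv.addLeft k) m = k + m := rfl
    rw [he, pow_add_val, map_mul]
    have hc := conj_pow_mul (D := D) ((k : ℕ) * (j : ℕ))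
    calc (starRingEnd ℂ) (a k) * z D ^ ((k : ℕ) * (j : ℕ)) * (a (k + m)
          * ((starRingEnd ℂ) (z D ^ ((k : ℕ) * (j : ℕ)))
            * (starRingEnd ℂ) (z D ^ ((m : ℕ) * (j : ℕ)))))
        = (starRingEnd ℂ) (a k) * a (k + m) * (starRingEnd ℂ) (z D ^ ((m : ℕ) * (j : ℕ)))
            * (z D ^ ((k : ℕ) * (j : ℕ)) * (starRingEnd ℂ) (z D ^ ((k : ℕ) * (j : ℕ)))) := by ring
      _ = _ := by rw [hc, mul_one]
  rw [Finset.sum_congr rfl fun k _ => h1 k, Finset.sum_comm]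
  have h2 : ∀ m : Fin D, ∑ k : Fin D, (starRingEnd ℂ) (a k) * a (k + m)
        * (starRingEnd ℂ) (z D ^ ((m : ℕ) * (j : ℕ)))
      = (if m = 0 then 1 else 0) * (starRingEnd ℂ) (z D ^ ((m : ℕ) * (j : ℕ))) := by
    intro m
    rw [← Finset.sum_mul, H m]
  rw [Finset.sum_congr rfl fun m _ => h2 m]
  simp only [ite_mul, one_mul, zero_mul, Finset.sum_ite_eq', Finset.mem_univ, if_true]
  simp

lemma imp_autocorr (a : Fin D → ℂ)
    (hc : ∀ j : Fin D, (starRingEnd ℂ) (dft a j) * dft a j = 1) (m : Fin D) :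
    ∑ k : Fin D, (starRingEnd ℂ) (a k) * a (k + m) = if m = 0 then 1 else 0 := by
  have hD : (D : ℂ) ≠ 0 := Nat.cast_ne_zero.mpr (NeZero.ne D)
  have h1 : ∀ k : Fin D, (starRingEnd ℂ) (a k) * a (k + m)
      = ∑ j : Fin D, (1 / (D : ℂ)) * ((starRingEnd ℂ) (a k) * z D ^ ((k : ℕ) * (j : ℕ)))
          * (dft a j * z D ^ ((m : ℕ) * (j : ℕ))) := by
    intro k
    conv_lhs => rw [← inversion a (k + m)]
    rw [Finset.mul_sum, Finset.mul_sum]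
    refine Finset.sum_congr rfl fun j _ => ?_
    rw [pow_add_val]
    ring
  rw [Finset.sum_congr rfl fun k _ => h1 k, Finset.sum_comm]
  have h2 : ∀ j : Fin D, ∑ k : Fin D, (1 / (D : ℂ)) * ((starRingEnd ℂ) (a k)
        * z D ^ ((k : ℕ) * (j : ℕ))) * (dft a j * z D ^ ((m : ℕ) * (j : ℕ)))
      = (1 / (D : ℂ)) * z D ^ ((m : ℕ) * (j : ℕ)) := by
    intro j
    have e1 : ∀ k : Fin D, (1 / (D : ℂ)) * ((starRingEnd ℂ) (a k)
          * z D ^ ((k : ℕ) * (j : ℕ))) * (dft a j * z D ^ ((m : ℕ) * (j : ℕ)))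
        = ((1 / (D : ℂ)) * (dft a j * z D ^ ((m : ℕ) * (j : ℕ))))
            * ((starRingEnd ℂ) (a k) * z D ^ ((k : ℕ) * (j : ℕ))) := fun k => by ring
    rw [Finset.sum_congr rfl fun k _ => e1 k, ← Finset.mul_sum, ← conj_dft]
    calc (1 / (D : ℂ)) * (dft a j * z D ^ ((m : ℕ) * (j : ℕ))) * (starRingEnd ℂ) (dft a j)
        = (1 / (D : ℂ)) * z D ^ ((m : ℕ) * (j : ℕ)) * ((starRingEnd ℂ) (dft a j) * dft a j) := by
          ring
      _ = _ := by rw [hc j, mul_one]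
  rw [Finset.sum_congr rfl fun j _ => h2 j, ← Finset.mul_sum, sum_z]
  split
  · field_simp
  · rw [mul_zero]

lemma abs_of_conj_mul (c : ℂ) (h : (starRingEnd ℂ) c * c = 1) : ‖c‖ = 1 := by
  rw [mul_comm, Complex.mul_conj] at h
  have h2 : Complex.normSq c = 1 := by exact_mod_cast h
  rw [Complex.norm_def, h2, Real.sqrt_one]

end Stmt6Aux

open Stmt6Aux in
/-- The orthonormality conditions `∑_k conj(a_k) a_{k⊕m} = δ_{m,0}` hold if and only if
there exist real phases `θ_j` with `a_k = (1/D) ∑_j e^{iθ_j} ω^{kj}`, `ω = e^{2πi/D}`. -/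
theorem stmt6 (D : ℕ) [NeZero D] (a : Fin D → ℂ) :
    (∀ m : Fin D, ∑ k : Fin D, (starRingEnd ℂ) (a k) * a (k + m)
        = if m = 0 then 1 else 0) ↔
    ∃ θ : Fin D → ℝ, ∀ k : Fin D,
      a k = (1 / (D : ℂ)) * ∑ j : Fin D,
        Complex.exp (Complex.I * (θ j : ℂ)) *
          Complex.exp (2 * Real.pi * Complex.I / D) ^ ((k : ℕ) * (j : ℕ)) := by
  constructor
  · intro H
    refine ⟨fun j => (dft a j).arg, fun k => ?_⟩
    have hcj : ∀ j : Fin D, Complex.exp (Complex.I * ((dft a j).arg : ℂ)) = dft a j := by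
      intro j
      have h1 := abs_of_conj_mul (dft a j) (autocorr_imp a H j)
      rw [mul_comm]
      conv_rhs => rw [← Complex.norm_mul_exp_arg_mul_I (dft a j)]
      rw [h1, Complex.ofReal_one, one_mul]
    have h2 : (1 / (D : ℂ)) * ∑ j : Fin D,
        Complex.exp (Complex.I * (((dft a j).arg : ℝ) : ℂ)) *
          Complex.exp (2 * Real.pi * Complex.I / D) ^ ((k : ℕ) * (j : ℕ))
        = (1 / (D : ℂ)) * ∑ j : Fin D, dft a j * z D ^ ((k : ℕ) * (j : ℕ)) := by
      rw [Finset.sum_congr rfl fun j _ => by rw [hcj j]]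
      rfl
    rw [h2, inversion]
  · rintro ⟨θ, hθ⟩
    have hform : ∀ k : Fin D, a k = (1 / (D : ℂ)) * ∑ j : Fin D,
        (fun j => Complex.exp (Complex.I * (θ j : ℂ))) j * z D ^ ((k : ℕ) * (j : ℕ)) := hθ
    have hdft := dft_of_formula a _ hform
    apply imp_autocorr
    intro j
    rw [hdft j]
    show (starRingEnd ℂ) (Complex.exp (Complex.I * (θ j : ℂ)))
        * Complex.exp (Complex.I * (θ j : ℂ)) = 1
    rw [← Complex.exp_conj, ← Complex.exp_add]
    have : (starRingEnd ℂ) (Complex.I * (θ j : ℂ)) + Complex.I * (θ j : ℂ) = 0 := by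
      rw [map_mul, Complex.conj_I, Complex.conj_ofReal]
      ring
    rw [this, Complex.exp_zero]
end

section
/- For D ≥ 2, the function f(t) = ∑_{r=1}^{D−1} r(D−r)·cot(πrt/D) is strictly decreasing on (0,1] and satisfies f(1) = 0; consequently f(t) > 0 for all t ∈ (0,1). -/
open Finset

lemma cot_lt_cot_aux {a b : ℝ} (ha : 0 < a) (hb : b < Real.pi) (hab : a < b) :
    Real.cot b < Real.cot a := by
  have hsa : 0 < Real.sin a := Real.sin_pos_of_pos_of_lt_pi ha (hab.trans hb)
  have hsb : 0 < Real.sin b := Real.sin_pos_of_pos_of_lt_pi (ha.trans hab) hb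
  have hsd : 0 < Real.sin (b - a) :=
    Real.sin_pos_of_pos_of_lt_pi (by linarith) (by linarith)
  rw [Real.sin_sub] at hsd
  rw [Real.cot_eq_cos_div_sin, Real.cot_eq_cos_div_sin, div_lt_div_iff₀ hsb hsa]
  nlinarith

lemma cot_pi_sub (x : ℝ) : Real.cot (Real.pi - x) = - Real.cot x := by
  rw [Real.cot_eq_cos_div_sin, Real.cot_eq_cos_div_sin, Real.cos_pi_sub, Real.sin_pi_sub,
    neg_div]

/-- For `D ≥ 2`, `f(t) = ∑_{r=1}^{D-1} r(D-r) cot(πrt/D)` is strictly decreasing on `(0,1]`,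
vanishes at `t = 1`, and hence is strictly positive on `(0,1)`. -/
theorem stmt16 (D : ℕ) (hD : 2 ≤ D) (f : ℝ → ℝ)
    (hf : ∀ t : ℝ, f t = ∑ r ∈ Finset.Ico 1 D,
      (r : ℝ) * ((D : ℝ) - r) * Real.cot (Real.pi * r * t / D)) :
    StrictAntiOn f (Set.Ioc 0 1) ∧ f 1 = 0 ∧ ∀ t ∈ Set.Ioo (0 : ℝ) 1, 0 < f t := by
  have hDpos : (0 : ℝ) < D := by positivity
  have hpi := Real.pi_pos
  have hanti : StrictAntiOn f (Set.Ioc 0 1) := by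
    intro s hs t ht hst
    rw [hf s, hf t]
    apply Finset.sum_lt_sum_of_nonempty
    · exact ⟨1, Finset.mem_Ico.2 ⟨le_refl 1, by omega⟩⟩
    · intro r hr
      obtain ⟨hr1, hrD⟩ := Finset.mem_Ico.1 hr
      have hrpos : (0 : ℝ) < r := by exact_mod_cast hr1
      have hrlt : (r : ℝ) < D := by exact_mod_cast hrD
      have hcoef : (0 : ℝ) < (r : ℝ) * ((D : ℝ) - r) := by nlinarith
      have hlt : Real.cot (Real.pi * r * t / D) < Real.cot (Real.pi * r * s / D) := by
        apply cot_lt_cot_aux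
        · have := hs.1; positivity
        · rw [div_lt_iff₀ hDpos]
          calc Real.pi * r * t ≤ Real.pi * r * 1 := by
                apply mul_le_mul_of_nonneg_left ht.2; positivity
            _ < Real.pi * D := by nlinarith
        · rw [div_lt_div_iff₀ hDpos hDpos]
          have : Real.pi * r * s < Real.pi * r * t := by
            apply mul_lt_mul_of_pos_left hst; positivity
          nlinarith
      exact mul_lt_mul_of_pos_left hlt hcoef
  have hf1 : f 1 = 0 := by
    have key : f 1 = - f 1 := by
      rw [hf 1]
      rw [show -(∑ r ∈ Finset.Ico 1 D, (r : ℝ) * ((D : ℝ) - r) *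
          Real.cot (Real.pi * r * 1 / D)) = ∑ r ∈ Finset.Ico 1 D,
          -((r : ℝ) * ((D : ℝ) - r) * Real.cot (Real.pi * r * 1 / D)) from
        (Finset.sum_neg_distrib _).symm]
      apply Finset.sum_nbij' (fun r => D - r) (fun r => D - r)
      · intro r hr; obtain ⟨h1, h2⟩ := Finset.mem_Ico.1 hr
        exact Finset.mem_Ico.2 ⟨by omega, by omega⟩
      · intro r hr; obtain ⟨h1, h2⟩ := Finset.mem_Ico.1 hr
        exact Finset.mem_Ico.2 ⟨by omega, by omega⟩
      · intro r hr; obtain ⟨h1, h2⟩ := Finset.mem_Ico.1 hr; omega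
      · intro r hr; obtain ⟨h1, h2⟩ := Finset.mem_Ico.1 hr; omega
      · intro r hr
        obtain ⟨h1, h2⟩ := Finset.mem_Ico.1 hr
        have hcast : ((D - r : ℕ) : ℝ) = (D : ℝ) - r := by
          rw [Nat.cast_sub (by omega)]
        rw [hcast]
        have harg : Real.pi * ((D : ℝ) - r) * 1 / D = Real.pi - Real.pi * r * 1 / D := by
          field_simp
        rw [harg, cot_pi_sub]
        ring
    linarith
  refine ⟨hanti, hf1, fun t ht => ?_⟩
  have := hanti ⟨ht.1, ht.2.le⟩ ⟨one_pos, le_refl 1⟩ ht.2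
  linarith [hf1 ▸ this]
end

section
/- For D ≥ 2, the function C_G(t) = (2^{D−1}/D)·∏_{r=1}^{D−1}[sin²(πrt/D)]^{(D−r)/D} is strictly increasing on the open interval (0,1), with C_G(0⁺) limit values C_G(t) → 0 as t → 0⁺ and C_G(1) = (2^{D−1}/D)·∏_{r=1}^{D−1}[sin²(πr/D)]^{(D−r)/D}. -/
open Finset

private lemma cot_strict_anti {x y : ℝ} (hx : 0 < x) (hxy : x < y) (hy : y < Real.pi) :
    Real.cos y / Real.sin y < Real.cos x / Real.sin x := by
  have sx : 0 < Real.sin x := Real.sin_pos_of_pos_of_lt_pi hx (hxy.trans hy)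
  have sy : 0 < Real.sin y := Real.sin_pos_of_pos_of_lt_pi (hx.trans hxy) hy
  rw [div_lt_div_iff₀ sy sx]
  have h : 0 < Real.sin (y - x) :=
    Real.sin_pos_of_pos_of_lt_pi (by linarith) (by linarith [hx, hy])
  rw [Real.sin_sub] at h
  nlinarith

private lemma angle_bounds {D r : ℕ} (hr1 : 1 ≤ r) (hr2 : r < D) {t : ℝ} (ht0 : 0 < t)
    (ht1 : t ≤ 1) : 0 < Real.pi * r * t / D ∧ Real.pi * r * t / D < Real.pi := by
  have hDn : 0 < D := by omega
  have hDpos : (0:ℝ) < D := by exact_mod_cast hDn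
  have hrpos : (0:ℝ) < r := by exact_mod_cast hr1
  have hrD : (r:ℝ) < D := by exact_mod_cast hr2
  constructor
  · positivity
  · rw [div_lt_iff₀ hDpos]
    have h1 : Real.pi * ↑r * t ≤ Real.pi * ↑r * 1 :=
      mul_le_mul_of_nonneg_left ht1 (by positivity)
    have h2 : Real.pi * ↑r < Real.pi * ↑D := mul_lt_mul_of_pos_left hrD Real.pi_pos
    linarith

/-- The weighted cotangent sum vanishes at `t = 1`, by the reflection `r ↦ D - r`. -/
private lemma cot_sum_zero (D : ℕ) (hD : 2 ≤ D) :
    ∑ r ∈ Finset.Ico 1 D, (2 * ((D - r : ℕ) : ℝ) / D) *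
      (Real.cos (Real.pi * r / D) * (Real.pi * r / D) / Real.sin (Real.pi * r / D)) = 0 := by
  have hDpos : (0:ℝ) < D := by positivity
  refine Finset.sum_involution (fun r _ => D - r) ?_ ?_ ?_ ?_
  · intro r hr
    obtain ⟨hr1, hr2⟩ := Finset.mem_Ico.mp hr
    have hc1 : ((D - r : ℕ) : ℝ) = (D : ℝ) - r := by
      push_cast [Nat.cast_sub hr2.le]; ring
    have hc2 : ((D - (D - r) : ℕ) : ℝ) = (r : ℝ) := by
      rw [Nat.sub_sub_self hr2.le]
    have hang : Real.pi * ((D - r : ℕ) : ℝ) / D = Real.pi - Real.pi * r / D := by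
      rw [hc1]; field_simp
    have hcos : Real.cos (Real.pi * ((D - r : ℕ) : ℝ) / D) = -Real.cos (Real.pi * r / D) := by
      rw [hang, Real.cos_pi_sub]
    have hsin : Real.sin (Real.pi * ((D - r : ℕ) : ℝ) / D) = Real.sin (Real.pi * r / D) := by
      rw [hang, Real.sin_pi_sub]
    show _ + (2 * ((D - (D - r) : ℕ) : ℝ) / D) *
      (Real.cos (Real.pi * ((D - r : ℕ) : ℝ) / D) * (Real.pi * ((D - r : ℕ) : ℝ) / D) /
        Real.sin (Real.pi * ((D - r : ℕ) : ℝ) / D)) = 0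
    rw [hc2, hcos, hsin, hc1]
    ring
  · intro r hr hne
    obtain ⟨hr1, hr2⟩ := Finset.mem_Ico.mp hr
    intro heq
    apply hne
    have heq' : D - r = r := heq
    have hD2r : D = 2 * r := by omega
    have : Real.pi * r / D = Real.pi / 2 := by
      rw [hD2r]
      have hrpos : (0:ℝ) < r := by exact_mod_cast hr1
      push_cast
      field_simp
    rw [this, Real.cos_pi_div_two]
    ring
  · intro r hr
    obtain ⟨hr1, hr2⟩ := Finset.mem_Ico.mp hr
    show D - r ∈ Finset.Ico 1 D
    exact Finset.mem_Ico.mpr ⟨by omega, by omega⟩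
  · intro r hr
    obtain ⟨hr1, hr2⟩ := Finset.mem_Ico.mp hr
    show D - (D - r) = r
    omega

/-- Positivity of the logarithmic derivative sum on `(0,1)`. -/
private lemma deriv_sum_pos (D : ℕ) (hD : 2 ≤ D) {t : ℝ} (ht0 : 0 < t) (ht1 : t < 1) :
    0 < ∑ r ∈ Finset.Ico 1 D, (2 * ((D - r : ℕ) : ℝ) / D) *
      (Real.cos (Real.pi * r * t / D) * (Real.pi * r / D) / Real.sin (Real.pi * r * t / D)) := by
  have hDpos : (0:ℝ) < D := by positivity
  have hzero := cot_sum_zero D hD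
  have hlt : ∑ r ∈ Finset.Ico 1 D, (2 * ((D - r : ℕ) : ℝ) / D) *
      (Real.cos (Real.pi * r / D) * (Real.pi * r / D) / Real.sin (Real.pi * r / D)) <
      ∑ r ∈ Finset.Ico 1 D, (2 * ((D - r : ℕ) : ℝ) / D) *
      (Real.cos (Real.pi * r * t / D) * (Real.pi * r / D) / Real.sin (Real.pi * r * t / D)) := by
    apply Finset.sum_lt_sum_of_nonempty
    · exact Finset.nonempty_Ico.mpr (by omega)
    · intro r hr
      obtain ⟨hr1, hr2⟩ := Finset.mem_Ico.mp hr
      have hrpos : (0:ℝ) < r := by exact_mod_cast hr1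
      obtain ⟨ha0, ha1⟩ := angle_bounds hr1 hr2 ht0 ht1.le
      obtain ⟨hb0, hb1⟩ := angle_bounds hr1 hr2 one_pos le_rfl
      have hb0' : 0 < Real.pi * r / D := by simpa using hb0
      have hb1' : Real.pi * r / D < Real.pi := by simpa using hb1
      have hxy : Real.pi * r * t / D < Real.pi * r / D := by
        rw [div_lt_div_iff₀ hDpos hDpos]
        nlinarith [mul_pos (mul_pos Real.pi_pos hrpos) hDpos]
      have hcot := cot_strict_anti ha0 hxy hb1'
      have hcoeff : 0 < (2 * ((D - r : ℕ) : ℝ) / D) * (Real.pi * r / D) := by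
        have : (0:ℝ) < ((D - r : ℕ) : ℝ) := by
          have : 0 < D - r := by omega
          exact_mod_cast this
        positivity
      calc (2 * ((D - r : ℕ) : ℝ) / D) *
            (Real.cos (Real.pi * r / D) * (Real.pi * r / D) / Real.sin (Real.pi * r / D))
          = ((2 * ((D - r : ℕ) : ℝ) / D) * (Real.pi * r / D)) *
            (Real.cos (Real.pi * r / D) / Real.sin (Real.pi * r / D)) := by ring
        _ < ((2 * ((D - r : ℕ) : ℝ) / D) * (Real.pi * r / D)) *
            (Real.cos (Real.pi * r * t / D) / Real.sin (Real.pi * r * t / D)) :=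
            mul_lt_mul_of_pos_left hcot hcoeff
        _ = (2 * ((D - r : ℕ) : ℝ) / D) *
            (Real.cos (Real.pi * r * t / D) * (Real.pi * r / D) / Real.sin (Real.pi * r * t / D)) := by
            ring
  linarith

/-- For `D ≥ 2`, the G-concurrence `C_G(t) = (2^{D-1}/D) ∏_{r=1}^{D-1} [sin²(πrt/D)]^{(D-r)/D}`
is strictly increasing on `(0,1)`, tends to `0` as `t → 0⁺`, and at `t = 1` equals
`(2^{D-1}/D) ∏_{r=1}^{D-1} [sin²(πr/D)]^{(D-r)/D}`. -/
theorem stmt17 (D : ℕ) (hD : 2 ≤ D) (C : ℝ → ℝ)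
    (hC : ∀ t : ℝ, C t = (2 : ℝ) ^ (D - 1) / D * ∏ r ∈ Finset.Ico 1 D,
      (Real.sin (Real.pi * r * t / D) ^ 2) ^ (((D - r : ℕ) : ℝ) / D)) :
    StrictMonoOn C (Set.Ioo 0 1) ∧
    Filter.Tendsto C (nhdsWithin 0 (Set.Ioi 0)) (nhds 0) ∧
    C 1 = (2 : ℝ) ^ (D - 1) / D * ∏ r ∈ Finset.Ico 1 D,
      (Real.sin (Real.pi * r / D) ^ 2) ^ (((D - r : ℕ) : ℝ) / D) := by
  have hDpos : (0:ℝ) < D := by positivity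
  set K : ℝ := (2 : ℝ) ^ (D - 1) / D with hK
  have hKpos : 0 < K := by positivity
  set F : ℝ → ℝ := fun t => ∑ r ∈ Finset.Ico 1 D,
    (2 * ((D - r : ℕ) : ℝ) / D) * Real.log (Real.sin (Real.pi * r * t / D)) with hF
  -- C agrees with K * exp (F t) on (0,1)
  have hEq : ∀ u ∈ Set.Ioo (0:ℝ) 1, C u = K * Real.exp (F u) := by
    intro u hu
    rw [hC u, hF]
    congr 1
    rw [Real.exp_sum]
    refine Finset.prod_congr rfl ?_
    intro r hr
    obtain ⟨hr1, hr2⟩ := Finset.mem_Ico.mp hr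
    obtain ⟨ha0, ha1⟩ := angle_bounds hr1 hr2 hu.1 hu.2.le
    have hsin : 0 < Real.sin (Real.pi * r * u / D) := Real.sin_pos_of_pos_of_lt_pi ha0 ha1
    rw [Real.rpow_def_of_pos (by positivity)]
    congr 1
    rw [Real.log_pow]
    push_cast
    ring
  -- F has positive derivative on (0,1)
  have hHasDeriv : ∀ t ∈ Set.Ioo (0:ℝ) 1, HasDerivAt F
      (∑ r ∈ Finset.Ico 1 D, (2 * ((D - r : ℕ) : ℝ) / D) *
        (Real.cos (Real.pi * r * t / D) * (Real.pi * r / D) / Real.sin (Real.pi * r * t / D))) t := by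
    intro t ht
    apply HasDerivAt.fun_sum
    intro r hr
    obtain ⟨hr1, hr2⟩ := Finset.mem_Ico.mp hr
    obtain ⟨ha0, ha1⟩ := angle_bounds hr1 hr2 ht.1 ht.2.le
    have hsin : Real.sin (Real.pi * r * t / D) ≠ 0 :=
      (Real.sin_pos_of_pos_of_lt_pi ha0 ha1).ne'
    have h1 : HasDerivAt (fun x : ℝ => Real.pi * r * x / D) (Real.pi * r / D) t := by
      simpa [mul_div_assoc] using
        ((hasDerivAt_id t).const_mul (Real.pi * (r:ℝ))).div_const (D:ℝ)
    have h2 : HasDerivAt (fun x : ℝ => Real.sin (Real.pi * r * x / D))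
        (Real.cos (Real.pi * r * t / D) * (Real.pi * r / D)) t :=
      (Real.hasDerivAt_sin (Real.pi * r * t / D)).comp (h := fun x : ℝ => Real.pi * r * x / D) t h1
    exact (h2.log hsin).const_mul _
  have hFmono : StrictMonoOn F (Set.Ioo 0 1) := by
    apply strictMonoOn_of_deriv_pos (convex_Ioo 0 1)
    · intro t ht
      exact ((hHasDeriv t ht).differentiableAt).continuousAt.continuousWithinAt
    · intro t ht
      rw [interior_Ioo] at ht
      rw [(hHasDeriv t ht).deriv]
      exact deriv_sum_pos D hD ht.1 ht.2
  refine ⟨?_, ?_, ?_⟩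
  · intro s hs t ht hst
    rw [hEq s hs, hEq t ht]
    exact mul_lt_mul_of_pos_left (Real.exp_lt_exp.mpr (hFmono hs ht hst)) hKpos
  · have hCfun : C = fun t => K * ∏ r ∈ Finset.Ico 1 D,
        (Real.sin (Real.pi * r * t / D) ^ 2) ^ (((D - r : ℕ) : ℝ) / D) := funext hC
    rw [hCfun]
    have hprod : Filter.Tendsto (fun t : ℝ => ∏ r ∈ Finset.Ico 1 D,
        (Real.sin (Real.pi * r * t / D) ^ 2) ^ (((D - r : ℕ) : ℝ) / D)) (nhds 0)
        (nhds (∏ r ∈ Finset.Ico 1 D, (0:ℝ))) := by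
      apply tendsto_finset_prod
      intro r hr
      obtain ⟨hr1, hr2⟩ := Finset.mem_Ico.mp hr
      have hcpos : 0 < ((D - r : ℕ) : ℝ) / D := by
        have : 0 < D - r := by omega
        have : (0:ℝ) < ((D - r : ℕ) : ℝ) := by exact_mod_cast this
        positivity
      have hinner : Filter.Tendsto (fun t : ℝ => Real.sin (Real.pi * r * t / D) ^ 2)
          (nhds 0) (nhds 0) := by
        have hcont : Continuous (fun t : ℝ => Real.sin (Real.pi * r * t / D) ^ 2) := by
          fun_prop
        have := hcont.tendsto 0
        simpa using this
      have houter : ContinuousAt (fun x : ℝ => x ^ (((D - r : ℕ) : ℝ) / D)) 0 :=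
        Real.continuousAt_rpow_const 0 _ (Or.inr hcpos.le)
      have := houter.tendsto.comp hinner
      simpa [Real.zero_rpow hcpos.ne', Function.comp_def] using this
    have h0 : (∏ r ∈ Finset.Ico 1 D, (0:ℝ)) = 0 := by
      rw [Finset.prod_const]
      exact zero_pow (by simp [Nat.card_Ico]; omega)
    rw [h0] at hprod
    have h2 : Filter.Tendsto (fun t : ℝ => K * ∏ r ∈ Finset.Ico 1 D,
        (Real.sin (Real.pi * r * t / D) ^ 2) ^ (((D - r : ℕ) : ℝ) / D)) (nhds 0) (nhds 0) := by
      simpa using hprod.const_mul K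
    exact h2.mono_left nhdsWithin_le_nhds
  · rw [hC 1]
    norm_num
end
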